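/- arXiv:1106.2735 — 2 statements merged into one kernel-verified Lean document; each statement's English description precedes it below -/
import Mathlib

section
/- For the circuit C_n with n odd, sdp(C_n, -e) = n·cos(pi/n), i.e., the maximum over unit vectors u_1,...,u_n in R^n of -sum over cycle edges (i,i+1) of <u_i, u_{i+1}> equals n·cos(pi/n). -/
open Finset Real
open scoped Classical Pointwise

noncomputable section

variable {V : Type*} [Fintype V] [LinearOrder V]

/-- Sum over the edges of `G` (pairs `i < j` with `G.Adj i j`) of `w i j * x i j`. -/
def edgeSum (G : SimpleGraph V) (w : V → V → ℝ) (x : V → V → ℝ) : ℝ :=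
  ∑ i, ∑ j, if i < j ∧ G.Adj i j then w i j * x i j else 0

/-- `ip(G,w)`: maximum of `∑_{ij ∈ E} w_ij x_i x_j` over `x ∈ {±1}^V`. -/
def ipVal (G : SimpleGraph V) (w : V → V → ℝ) : ℝ :=
  sSup {t | ∃ x : V → ℝ, (∀ i, x i = 1 ∨ x i = -1) ∧
    t = edgeSum G w (fun i j => x i * x j)}

/-- `sdp(G,w)`: maximum of `∑_{ij ∈ E} w_ij ⟪u_i,u_j⟫` over unit vectors. -/
def sdpVal (G : SimpleGraph V) (w : V → V → ℝ) : ℝ :=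
  sSup {t | ∃ u : V → EuclideanSpace ℝ V, (∀ i, ‖u i‖ = 1) ∧
    t = edgeSum G w (fun i j => (inner ℝ (u i) (u j) : ℝ))}

/-- The Grothendieck constant `κ(G) = sup_w sdp(G,w)/ip(G,w)`. -/
def kappaVal (G : SimpleGraph V) : ℝ :=
  sSup {t | ∃ w : V → V → ℝ, t = sdpVal G w / ipVal G w}

/-- The elliptope: PSD matrices with unit diagonal. -/
def elliptope (V : Type*) [Fintype V] : Set (Matrix V V ℝ) :=
  {X | X.PosSemidef ∧ ∀ i, X i i = 1}

/-- The cut polytope: convex hull of rank-one ±1 correlation matrices. -/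
def cutPolytope (V : Type*) [Fintype V] : Set (Matrix V V ℝ) :=
  convexHull ℝ {X | ∃ x : V → ℝ, (∀ i, x i = 1 ∨ x i = -1) ∧
    X = Matrix.of fun i j => x i * x j}

/-- Projection of a matrix onto the edge set of `G`. -/
def projE (G : SimpleGraph V) (X : Matrix V V ℝ) : V → V → ℝ :=
  fun i j => if G.Adj i j then X i j else 0

/-- `𝓔(G)`: projection of the elliptope onto the edge set of `G`. -/
def ellG (G : SimpleGraph V) : Set (V → V → ℝ) := projE G '' elliptope V

/-- `CUT(G)`: projection of the cut polytope onto the edge set of `G`. -/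
def cutG (G : SimpleGraph V) : Set (V → V → ℝ) := projE G '' cutPolytope V

end
section MyAux
open scoped RealInnerProductSpace

variable {E : Type*} [NormedAddCommGroup E] [InnerProductSpace ℝ E]

lemma my_arccos_anti {x y : ℝ} (h : x ≤ y) : Real.arccos y ≤ Real.arccos x := by
  unfold Real.arccos
  have := Real.monotone_arcsin h
  linarith

lemma my_tri (u v w : E) (hu : ‖u‖ = 1) (hv : ‖v‖ = 1) (hw : ‖w‖ = 1) :
    Real.arccos ⟪u, w⟫ ≤ Real.arccos ⟪u, v⟫ + Real.arccos ⟪v, w⟫ := by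
  set p := ⟪u, v⟫ with hp
  set q := ⟪v, w⟫ with hq
  set r := ⟪u, w⟫ with hr
  have hp1 : |p| ≤ 1 := by simpa [hu, hv] using abs_real_inner_le_norm u v
  have hq1 : |q| ≤ 1 := by simpa [hv, hw] using abs_real_inner_le_norm v w
  have hr1 : |r| ≤ 1 := by simpa [hu, hw] using abs_real_inner_le_norm u w
  rw [abs_le] at hp1 hq1 hr1
  by_cases hab : π ≤ Real.arccos p + Real.arccos q
  · exact le_trans (Real.arccos_le_pi r) hab
  · push_neg at hab
    have hvv : ⟪v, v⟫ = (1:ℝ) := by rw [real_inner_self_eq_norm_sq, hv]; norm_num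
    have huu : ⟪u, u⟫ = (1:ℝ) := by rw [real_inner_self_eq_norm_sq, hu]; norm_num
    have hww : ⟪w, w⟫ = (1:ℝ) := by rw [real_inner_self_eq_norm_sq, hw]; norm_num
    have hvu : ⟪v, u⟫ = p := (real_inner_comm v u).symm
    have hwv2 : ⟪w, v⟫ = q := real_inner_comm v w
    have hwv : ⟪v, w⟫ = q := rfl
    have key : Real.cos (Real.arccos p + Real.arccos q) ≤ r := by
      rw [Real.cos_add, Real.cos_arccos hp1.1 hp1.2, Real.cos_arccos hq1.1 hq1.2,
        Real.sin_arccos, Real.sin_arccos]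
      have hup : ⟪u - p • v, w - q • v⟫ = r - p * q := by
        simp only [inner_sub_left, inner_sub_right, real_inner_smul_left,
          real_inner_smul_right, hvv, hvu, hwv, ← hp, ← hq, ← hr]
        ring
      have hnu : ‖u - p • v‖ = Real.sqrt (1 - p ^ 2) := by
        rw [← Real.sqrt_sq (norm_nonneg _)]
        congr 1
        rw [← real_inner_self_eq_norm_sq]
        simp only [inner_sub_left, inner_sub_right, real_inner_smul_left,
          real_inner_smul_right, hvv, hvu, huu, ← hp]
        ring
      have hnw : ‖w - q • v‖ = Real.sqrt (1 - q ^ 2) := by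
        rw [← Real.sqrt_sq (norm_nonneg _)]
        congr 1
        rw [← real_inner_self_eq_norm_sq]
        simp only [inner_sub_left, inner_sub_right, real_inner_smul_left,
          real_inner_smul_right, hvv, hwv, hwv2, hww, ← hq]
        ring
      have cs := abs_real_inner_le_norm (u - p • v) (w - q • v)
      rw [hup, hnu, hnw, abs_le] at cs
      linarith [cs.1]
    calc Real.arccos r ≤ Real.arccos (Real.cos (Real.arccos p + Real.arccos q)) :=
          my_arccos_anti key
      _ = _ := Real.arccos_cos (add_nonneg (Real.arccos_nonneg p) (Real.arccos_nonneg q)) hab.le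

lemma my_chain (v : ℕ → E) (hv : ∀ k, ‖v k‖ = 1) (k : ℕ) :
    Real.arccos ⟪v 0, v k⟫ ≤ ∑ i ∈ Finset.range k, Real.arccos ⟪v i, v (i + 1)⟫ := by
  induction k with
  | zero =>
    have : ⟪v 0, v 0⟫ = 1 := by
      rw [real_inner_self_eq_norm_sq, hv 0]; norm_num
    simp [this, hv, Real.arccos_one]
  | succ k ih =>
    have := my_tri (v 0) (v k) (v (k + 1)) (hv 0) (hv k) (hv (k + 1))
    rw [Finset.sum_range_succ]
    linarith


lemma my_core (n : ℕ) (hn : n = 3 ∨ 5 ≤ n) (δ : Fin n → ℝ) (h0 : ∀ i, 0 ≤ δ i)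
    (h1 : ∀ i, δ i ≤ π) (hs : ∑ i, δ i = π) :
    ∑ i, Real.cos (δ i) ≤ n * Real.cos (π / n) := by
  rcases hn with rfl | h5
  · rw [Fin.sum_univ_three] at hs ⊢
    have e2 : δ 2 = π - (δ 0 + δ 1) := by linarith
    rw [e2, Real.cos_pi_sub]
    have hcc : Real.cos (δ 0) + Real.cos (δ 1) =
        2 * Real.cos ((δ 0 + δ 1) / 2) * Real.cos ((δ 0 - δ 1) / 2) := Real.cos_add_cos _ _
    have h2 : Real.cos (δ 0 + δ 1) = 2 * Real.cos ((δ 0 + δ 1) / 2) ^ 2 - 1 := by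
      have h := Real.cos_two_mul ((δ 0 + δ 1) / 2)
      rw [show 2 * ((δ 0 + δ 1) / 2) = δ 0 + δ 1 by ring] at h
      exact h
    have hd : Real.cos ((δ 0 - δ 1) / 2) ^ 2 ≤ 1 := Real.cos_sq_le_one _
    have h3 : ((3:ℕ):ℝ) = 3 := by norm_num
    rw [h3, Real.cos_pi_div_three]
    nlinarith [sq_nonneg (2 * Real.cos ((δ 0 + δ 1) / 2) - Real.cos ((δ 0 - δ 1) / 2))]
  · have hnpos : (0:ℝ) < n := by
      have : (5:ℝ) ≤ n := by exact_mod_cast h5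
      linarith
    by_cases hall : ∀ i, δ i ≤ π / 2
    · have hconc : ConcaveOn ℝ (Set.Icc (-(π / 2)) (π / 2)) Real.cos :=
        strictConcaveOn_cos_Icc.concaveOn
      have jensen := hconc.le_map_sum (t := Finset.univ) (w := fun _ : Fin n => 1 / (n:ℝ))
        (p := δ) (fun i _ => by positivity)
        (by rw [Finset.sum_const, Finset.card_univ, Fintype.card_fin, nsmul_eq_mul]
            field_simp)
        (fun i _ => ⟨by linarith [h0 i, Real.pi_pos], hall i⟩)
      have hsum : ∑ i : Fin n, (1 / (n:ℝ)) • δ i = π / n := by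
        simp only [smul_eq_mul, ← Finset.mul_sum, hs]
        ring
      rw [hsum] at jensen
      simp only [smul_eq_mul, ← Finset.mul_sum] at jensen
      calc ∑ i, Real.cos (δ i) = n * (1 / (n:ℝ) * ∑ i, Real.cos (δ i)) := by
            field_simp
        _ ≤ n * Real.cos (π / n) := by
            exact mul_le_mul_of_nonneg_left jensen (le_of_lt hnpos)
    · push_neg at hall
      obtain ⟨j, hj⟩ := hall
      have hδj : Real.cos (δ j) ≤ 0 :=
        Real.cos_nonpos_of_pi_div_two_le_of_le hj.le (by linarith [h1 j, Real.pi_pos])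
      have hrest : ∑ i ∈ Finset.univ.erase j, Real.cos (δ i) ≤ (n:ℝ) - 1 := by
        calc ∑ i ∈ Finset.univ.erase j, Real.cos (δ i)
            ≤ (Finset.univ.erase j).card • (1:ℝ) :=
              Finset.sum_le_card_nsmul _ _ 1 (fun i _ => Real.cos_le_one _)
          _ = (n:ℝ) - 1 := by
              rw [Finset.card_erase_of_mem (Finset.mem_univ j), Finset.card_univ,
                Fintype.card_fin, nsmul_eq_mul, mul_one, Nat.cast_sub (by omega)]
              norm_num
      have hsplit : ∑ i, Real.cos (δ i) =
          Real.cos (δ j) + ∑ i ∈ Finset.univ.erase j, Real.cos (δ i) :=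
        (Finset.add_sum_erase _ _ (Finset.mem_univ j)).symm
      have hb := Real.one_sub_sq_div_two_le_cos (x := π / n)
      have hπ : π < 3.15 := Real.pi_lt_d2
      have hn5 : (5:ℝ) ≤ n := by exact_mod_cast h5
      have h2n : π ^ 2 ≤ 2 * n := by nlinarith [Real.pi_pos]
      have hkey : (n:ℝ) - 1 ≤ n * Real.cos (π / n) := by
        have e : (n:ℝ) * (1 - (π / n) ^ 2 / 2) = n - π ^ 2 / (2 * n) := by
          field_simp
        have : π ^ 2 / (2 * n) ≤ 1 := by
          rw [div_le_one (by linarith)]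
          exact h2n
        nlinarith [mul_le_mul_of_nonneg_left hb (le_of_lt hnpos)]
      linarith [hsplit, hδj, hrest, hkey]

end MyAux

open scoped RealInnerProductSpace

/-- for the odd circuit `C_n`, `sdp(C_n, -e) = n·cos(π/n)`. -/
theorem sdp_cycle_neg_ones (n : ℕ) (hn : 3 ≤ n) (hodd : Odd n) :
    IsGreatest {t : ℝ | ∃ u : Fin n → EuclideanSpace ℝ (Fin n),
      (∀ i, ‖u i‖ = 1) ∧
      t = -∑ i : Fin n,
        (inner ℝ (u i) (u ⟨(i.val + 1) % n, Nat.mod_lt _ (by omega)⟩) : ℝ)}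
      ((n : ℝ) * Real.cos (π / n)) := by
  have hn0 : 0 < n := by omega
  obtain ⟨k, hk⟩ := hodd
  constructor
  · -- membership
    set α : ℝ := π - π / n with hα
    set e0 : EuclideanSpace ℝ (Fin n) := EuclideanSpace.single ⟨0, by omega⟩ 1 with he0
    set e1 : EuclideanSpace ℝ (Fin n) := EuclideanSpace.single ⟨1, by omega⟩ 1 with he1
    have h00 : ⟪e0, e0⟫ = (1:ℝ) := by
      simp [he0, EuclideanSpace.inner_single_left, EuclideanSpace.single_apply]
    have h11 : ⟪e1, e1⟫ = (1:ℝ) := by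
      simp [he1, EuclideanSpace.inner_single_left, EuclideanSpace.single_apply]
    have h01 : ⟪e0, e1⟫ = (0:ℝ) := by
      simp only [he0, he1, EuclideanSpace.inner_single_left, EuclideanSpace.single_apply,
        Fin.ext_iff]
      norm_num
    have h10 : ⟪e1, e0⟫ = (0:ℝ) := by
      simp only [he0, he1, EuclideanSpace.inner_single_left, EuclideanSpace.single_apply,
        Fin.ext_iff]
      norm_num
    have key : ∀ s t : ℝ,
        ⟪Real.cos s • e0 + Real.sin s • e1, Real.cos t • e0 + Real.sin t • e1⟫
          = Real.cos (s - t) := by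
      intro s t
      simp only [inner_add_left, inner_add_right, real_inner_smul_left,
        real_inner_smul_right, h00, h11, h01, h10]
      rw [Real.cos_sub]
      ring
    refine ⟨fun i => Real.cos (i.1 * α) • e0 + Real.sin (i.1 * α) • e1, fun i => ?_, ?_⟩
    · have h : ⟪Real.cos (i.1 * α) • e0 + Real.sin (i.1 * α) • e1,
          Real.cos (i.1 * α) • e0 + Real.sin (i.1 * α) • e1⟫ = (1:ℝ) := by
        rw [key]; simp
      rw [← Real.sqrt_sq (norm_nonneg _), ← real_inner_self_eq_norm_sq, h, Real.sqrt_one]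
    · have hnα : (n:ℝ) * α = (k:ℝ) * (2 * π) := by
        rw [hα]
        have hne : (n:ℝ) ≠ 0 := by positivity
        field_simp
        rw [hk]
        push_cast
        ring
      have hedge : ∀ i : Fin n,
          ⟪Real.cos (i.1 * α) • e0 + Real.sin (i.1 * α) • e1,
            Real.cos ((((i.1 + 1) % n : ℕ) : ℝ) * α) • e0 +
              Real.sin ((((i.1 + 1) % n : ℕ) : ℝ) * α) • e1⟫ = -Real.cos (π / n) := by
        intro i
        rw [key]
        set q := (i.1 + 1) / n with hq
        have hdm : n * q + (i.1 + 1) % n = i.1 + 1 := Nat.div_add_mod (i.1 + 1) n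
        have hmodr : (((i.1 + 1) % n : ℕ) : ℝ) = ((i.1 : ℝ) + 1) - (n : ℝ) * q := by
          have := congrArg (Nat.cast : ℕ → ℝ) hdm
          push_cast at this
          linarith
        have harg : (i.1 : ℝ) * α - (((i.1 + 1) % n : ℕ) : ℝ) * α
            = -α + ((q * k : ℕ) : ℤ) * (2 * π) := by
          rw [hmodr]
          push_cast
          linear_combination (q : ℝ) * hnα
        rw [harg, Real.cos_add_int_mul_two_pi, Real.cos_neg, hα, Real.cos_pi_sub]
      rw [Finset.sum_congr rfl (fun i _ => hedge i), Finset.sum_const, Finset.card_univ,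
        Fintype.card_fin, nsmul_eq_mul]
      ring
  · -- upper bound
    rintro t ⟨u, hu, rfl⟩
    have hn35 : n = 3 ∨ 5 ≤ n := by omega
    set idx : ℕ → Fin n := fun m => ⟨m % n, Nat.mod_lt _ hn0⟩ with hidx
    set x : ℕ → ℝ := fun m => ⟪u (idx m), u (idx (m + 1))⟫ with hx
    have hx1 : ∀ m, |x m| ≤ 1 := fun m => by
      simpa [hx, hu] using abs_real_inner_le_norm (u (idx m)) (u (idx (m + 1)))
    set v : ℕ → EuclideanSpace ℝ (Fin n) := fun m => ((-1 : ℝ)) ^ m • u (idx m) with hv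
    have hvnorm : ∀ m, ‖v m‖ = 1 := by
      intro m
      rw [hv]
      simp only [norm_smul, norm_pow, norm_neg, norm_one, one_pow, one_mul, hu]
    have hinner : ∀ m, ⟪v m, v (m + 1)⟫ = -(x m) := by
      intro m
      rw [hv]
      simp only [real_inner_smul_left, real_inner_smul_right, pow_succ]
      have h2 : ((-1 : ℝ)) ^ m * ((-1 : ℝ)) ^ m = 1 := by
        rw [← mul_pow]; norm_num
      rw [hx]
      linear_combination (-(⟪u (idx m), u (idx (m + 1))⟫ : ℝ)) * h2
    have hchain := my_chain v hvnorm n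
    have h0n : ⟪v 0, v n⟫ = -1 := by
      simp only [hv]
      have hidxn : idx n = idx 0 := by
        apply Fin.ext
        simp [hidx, Nat.mod_self]
      rw [hidxn, pow_zero, one_smul, real_inner_smul_right,
        (by rw [hk]; exact Odd.neg_one_pow ⟨k, by ring⟩ : ((-1 : ℝ)) ^ n = -1),
        real_inner_self_eq_norm_sq, hu]
      norm_num
    rw [h0n, Real.arccos_neg_one] at hchain
    set δ : ℕ → ℝ := fun m => π - Real.arccos (x m) with hδ
    have hδ0 : ∀ m, 0 ≤ δ m := fun m => by
      have := Real.arccos_le_pi (x m); simp only [hδ]; linarith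
    have hδπ : ∀ m, δ m ≤ π := fun m => by
      have := Real.arccos_nonneg (x m); simp only [hδ]; linarith
    have hsum_ge : π ≤ ∑ m ∈ Finset.range n, δ m := by
      refine le_trans hchain (le_of_eq (Finset.sum_congr rfl fun m _ => ?_))
      rw [hinner m, Real.arccos_neg]
    set S := ∑ m ∈ Finset.range n, δ m with hS
    have hSpos : 0 < S := lt_of_lt_of_le Real.pi_pos hsum_ge
    set c : ℝ := π / S with hc
    have hc0 : 0 ≤ c := by positivity
    have hc1 : c ≤ 1 := by
      rw [hc, div_le_one hSpos]; exact hsum_ge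
    have hcS : c * S = π := by
      rw [hc]; field_simp
    have hcore := my_core n hn35 (fun i => c * δ i.1)
      (fun i => mul_nonneg hc0 (hδ0 i.1))
      (fun i => le_trans (show c * δ i.1 ≤ δ i.1 by nlinarith [hδ0 i.1, hc1]) (hδπ i.1))
      (by rw [Fin.sum_univ_eq_sum_range (fun m => c * δ m) n, ← Finset.mul_sum, ← hS, hcS])
    have hmono : ∀ i : Fin n, Real.cos (δ i.1) ≤ Real.cos (c * δ i.1) := fun i =>
      Real.cos_le_cos_of_nonneg_of_le_pi (mul_nonneg hc0 (hδ0 i.1)) (hδπ i.1)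
        (by nlinarith [hδ0 i.1, hc1])
    have hterm : ∀ i : Fin n,
        (inner ℝ (u i) (u ⟨(i.val + 1) % n, Nat.mod_lt _ (by omega)⟩) : ℝ) = x i.1 := by
      intro i
      rw [hx]
      congr 1
      apply congrArg
      apply Fin.ext
      simp [hidx, Nat.mod_eq_of_lt i.isLt]
    have hxm : ∀ m, x m = -Real.cos (δ m) := by
      intro m
      have h := hx1 m
      rw [abs_le] at h
      rw [hδ]
      rw [Real.cos_pi_sub, Real.cos_arccos h.1 h.2]
      ring
    have hfin : ∑ i : Fin n, (inner ℝ (u i)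
        (u ⟨(i.val + 1) % n, Nat.mod_lt _ (by omega)⟩) : ℝ)
        = ∑ i : Fin n, -Real.cos (δ i.1) := by
      refine Finset.sum_congr rfl fun i _ => ?_
      rw [hterm i, hxm i.1]
    rw [hfin]
    have : ∑ i : Fin n, Real.cos (δ i.1) ≤ ∑ i : Fin n, Real.cos (c * δ i.1) :=
      Finset.sum_le_sum fun i _ => hmono i
    rw [Finset.sum_neg_distrib, neg_neg]
    exact le_trans this hcore
end

section
/- If G belongs to G_k (i.e., CUT(G) is defined by valid inequalities supported by at most k points), then kappa(G) <= kappa(K_k). -/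
open Finset Real
set_option linter.unusedSectionVars false
open scoped Classical Pointwise

noncomputable section
variable {V : Type*} [Fintype V] [LinearOrder V]

/-- `wᵀX` over all pairs `i < j`. -/
def edgeSumAll (w : V → V → ℝ) (X : Matrix V V ℝ) : ℝ :=
  ∑ i, ∑ j, if i < j then w i j * X i j else 0

/-- `wᵀx ≤ 1` is valid for the cut polytope. -/
def ValidIneq (w : V → V → ℝ) : Prop :=
  ∀ X ∈ cutPolytope V, edgeSumAll w X ≤ 1

/-- The vertex support of the inequality `w`. -/
def suppSet (w : V → V → ℝ) : Set V :=
  {i | ∃ j, (i < j ∧ w i j ≠ 0) ∨ (j < i ∧ w j i ≠ 0)}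

/-- `𝓡_k`: points satisfying every valid inequality supported on `≤ k` vertices. -/
def Rk (V : Type*) [Fintype V] [LinearOrder V] (k : ℕ) : Set (Matrix V V ℝ) :=
  {X | ∀ w : V → V → ℝ, ValidIneq w → (suppSet w).ncard ≤ k → edgeSumAll w X ≤ 1}

/-- `G ∈ 𝒢_k`: `CUT(G) = 𝓡_k(G)`. -/
def inGk (k : ℕ) (G : SimpleGraph V) : Prop :=
  cutG G = projE G '' Rk V k

end

section Aux1
variable {V : Type*} [Fintype V] [LinearOrder V]
open Finset

def toSign (s : V → Bool) : V → ℝ := fun i => if s i then 1 else -1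

lemma toSign_pm (s : V → Bool) (i : V) : toSign s i = 1 ∨ toSign s i = -1 := by
  unfold toSign; split <;> simp

lemma pm_mul {x y : ℝ} (hx : x = 1 ∨ x = -1) (hy : y = 1 ∨ y = -1) :
    x * y = 1 ∨ x * y = -1 := by
  rcases hx with h | h <;> rcases hy with h' | h' <;> simp [h, h']

lemma abs_pm {x : ℝ} (h : x = 1 ∨ x = -1) : |x| = 1 := by
  rcases h with h | h <;> simp [h]

lemma sum_toSign_mul {i j : V} (hij : i ≠ j) :
    ∑ s : V → Bool, toSign s i * toSign s j = 0 := by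
  refine Finset.sum_involution (fun s _ => Function.update s i (!s i)) ?_ ?_
    (fun s _ => Finset.mem_univ _) ?_
  · intro s _
    have h1 : toSign (Function.update s i (!s i)) i = -toSign s i := by
      simp only [toSign, Function.update_self]
      cases s i <;> norm_num
    have h2 : toSign (Function.update s i (!s i)) j = toSign s j := by
      simp only [toSign, Function.update_of_ne (Ne.symm hij)]
    rw [h1, h2]; ring
  · intro s _ _
    intro hcon
    have := congrFun hcon i
    simp [Function.update_self] at this
  · intro s _
    ext l
    by_cases hl : l = i
    · subst hl; simp [Function.update_self]
    · simp [Function.update_of_ne hl]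

lemma edgeSum_eq (G : SimpleGraph V) (w x : V → V → ℝ) :
    edgeSum G w x = ∑ i, ∑ j, (if i < j ∧ G.Adj i j then w i j else 0) * x i j := by
  unfold edgeSum
  refine Finset.sum_congr rfl fun i _ => Finset.sum_congr rfl fun j _ => ?_
  split <;> simp

lemma edgeSum_le_absSum (G : SimpleGraph V) (w x : V → V → ℝ) (hx : ∀ i j, |x i j| ≤ 1) :
    edgeSum G w x ≤ ∑ i, ∑ j, (if i < j ∧ G.Adj i j then |w i j| else 0) := by
  unfold edgeSum
  refine Finset.sum_le_sum fun i _ => Finset.sum_le_sum fun j _ => ?_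
  split
  · calc w i j * x i j ≤ |w i j * x i j| := le_abs_self _
      _ = |w i j| * |x i j| := abs_mul _ _
      _ ≤ |w i j| * 1 := mul_le_mul_of_nonneg_left (hx i j) (abs_nonneg _)
      _ = |w i j| := mul_one _
  · exact le_rfl

end Aux1

section Aux2
variable {V : Type*} [Fintype V] [LinearOrder V]
open Finset

/-- bound on |w|-sum -/
noncomputable def absSum (G : SimpleGraph V) (w : V → V → ℝ) : ℝ :=
  ∑ i, ∑ j, (if i < j ∧ G.Adj i j then |w i j| else 0)

lemma absSum_nonneg (G : SimpleGraph V) (w : V → V → ℝ) : 0 ≤ absSum G w := by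
  refine Finset.sum_nonneg fun i _ => Finset.sum_nonneg fun j _ => ?_
  split <;> positivity

lemma ip_mem_le (G : SimpleGraph V) (w : V → V → ℝ) {t : ℝ}
    (ht : t ∈ {t | ∃ x : V → ℝ, (∀ i, x i = 1 ∨ x i = -1) ∧
      t = edgeSum G w (fun i j => x i * x j)}) : t ≤ absSum G w := by
  obtain ⟨x, hx, rfl⟩ := ht
  exact edgeSum_le_absSum G w _ fun i j => by
    rw [abs_pm (pm_mul (hx i) (hx j))]

lemma ip_bddAbove (G : SimpleGraph V) (w : V → V → ℝ) :
    BddAbove {t | ∃ x : V → ℝ, (∀ i, x i = 1 ∨ x i = -1) ∧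
      t = edgeSum G w (fun i j => x i * x j)} :=
  ⟨absSum G w, fun _ ht => ip_mem_le G w ht⟩

lemma le_ipVal (G : SimpleGraph V) (w : V → V → ℝ) {x : V → ℝ}
    (hx : ∀ i, x i = 1 ∨ x i = -1) :
    edgeSum G w (fun i j => x i * x j) ≤ ipVal G w :=
  le_csSup (ip_bddAbove G w) ⟨x, hx, rfl⟩

lemma ipVal_le (G : SimpleGraph V) (w : V → V → ℝ) {a : ℝ} (ha : 0 ≤ a)
    (h : ∀ x : V → ℝ, (∀ i, x i = 1 ∨ x i = -1) →
      edgeSum G w (fun i j => x i * x j) ≤ a) : ipVal G w ≤ a := by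
  refine Real.sSup_le ?_ ha
  rintro t ⟨x, hx, rfl⟩
  exact h x hx

lemma sdp_mem_le (G : SimpleGraph V) (w : V → V → ℝ) {t : ℝ}
    (ht : t ∈ {t | ∃ u : V → EuclideanSpace ℝ V, (∀ i, ‖u i‖ = 1) ∧
      t = edgeSum G w (fun i j => (inner ℝ (u i) (u j) : ℝ))}) : t ≤ absSum G w := by
  obtain ⟨u, hu, rfl⟩ := ht
  refine edgeSum_le_absSum G w _ fun i j => ?_
  calc |(inner ℝ (u i) (u j) : ℝ)| ≤ ‖u i‖ * ‖u j‖ := abs_real_inner_le_norm _ _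
    _ = 1 := by rw [hu i, hu j, one_mul]

lemma sdp_bddAbove (G : SimpleGraph V) (w : V → V → ℝ) :
    BddAbove {t | ∃ u : V → EuclideanSpace ℝ V, (∀ i, ‖u i‖ = 1) ∧
      t = edgeSum G w (fun i j => (inner ℝ (u i) (u j) : ℝ))} :=
  ⟨absSum G w, fun _ ht => sdp_mem_le G w ht⟩

lemma le_sdpVal (G : SimpleGraph V) (w : V → V → ℝ) {u : V → EuclideanSpace ℝ V}
    (hu : ∀ i, ‖u i‖ = 1) :
    edgeSum G w (fun i j => (inner ℝ (u i) (u j) : ℝ)) ≤ sdpVal G w :=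
  le_csSup (sdp_bddAbove G w) ⟨u, hu, rfl⟩

lemma sdpVal_le (G : SimpleGraph V) (w : V → V → ℝ) {a : ℝ} (ha : 0 ≤ a)
    (h : ∀ u : V → EuclideanSpace ℝ V, (∀ i, ‖u i‖ = 1) →
      edgeSum G w (fun i j => (inner ℝ (u i) (u j) : ℝ)) ≤ a) : sdpVal G w ≤ a := by
  refine Real.sSup_le ?_ ha
  rintro t ⟨u, hu, rfl⟩
  exact h u hu

/-- the standard orthonormal family -/
lemma exists_unit_ortho :
    ∃ u : V → EuclideanSpace ℝ V, (∀ i, ‖u i‖ = 1) ∧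
      ∀ i j, i ≠ j → (inner ℝ (u i) (u j) : ℝ) = 0 := by
  refine ⟨fun i => EuclideanSpace.single i 1, fun i => ?_, fun i j hij => ?_⟩
  · simp [EuclideanSpace.norm_single]
  · rw [EuclideanSpace.inner_single_left]
    simp [EuclideanSpace.single_apply]
    exact hij

lemma sdpVal_nonneg (G : SimpleGraph V) (w : V → V → ℝ) : 0 ≤ sdpVal G w := by
  obtain ⟨u, hu, hortho⟩ := (exists_unit_ortho (V := V))
  have h : edgeSum G w (fun i j => (inner ℝ (u i) (u j) : ℝ)) = 0 := by
    unfold edgeSum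
    refine Finset.sum_eq_zero fun i _ => Finset.sum_eq_zero fun j _ => ?_
    split
    · next h => simp [hortho i j (ne_of_lt h.1)]
    · rfl
  calc (0:ℝ) = _ := h.symm
    _ ≤ sdpVal G w := le_sdpVal G w hu

lemma sdpVal_zero (G : SimpleGraph V) : sdpVal G (fun _ _ => 0) = 0 := by
  refine le_antisymm (sdpVal_le G _ le_rfl fun u hu => ?_) (sdpVal_nonneg G _)
  unfold edgeSum
  refine le_of_eq (Finset.sum_eq_zero fun i _ => Finset.sum_eq_zero fun j _ => ?_)
  split <;> simp

lemma ipVal_nonneg (G : SimpleGraph V) (w : V → V → ℝ) : 0 ≤ ipVal G w := by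
  have hsum : ∑ s : V → Bool, edgeSum G w (fun i j => toSign s i * toSign s j) = 0 := by
    unfold edgeSum
    rw [Finset.sum_comm]
    refine Finset.sum_eq_zero fun i _ => ?_
    rw [Finset.sum_comm]
    refine Finset.sum_eq_zero fun j _ => ?_
    split
    · next h =>
      rw [← Finset.mul_sum, sum_toSign_mul (ne_of_lt h.1), mul_zero]
    · exact Finset.sum_const_zero
  have hex : ∃ s : V → Bool, 0 ≤ edgeSum G w (fun i j => toSign s i * toSign s j) := by
    by_contra hcon
    push_neg at hcon
    have : ∑ s : V → Bool, edgeSum G w (fun i j => toSign s i * toSign s j) < 0 := by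
      have := Finset.sum_lt_sum_of_nonempty (Finset.univ_nonempty (α := V → Bool))
        (f := fun s => edgeSum G w (fun i j => toSign s i * toSign s j))
        (g := fun _ => (0:ℝ)) (fun s _ => hcon s)
      simpa using this
    linarith
  obtain ⟨s, hs⟩ := hex
  exact hs.trans (le_ipVal G w (toSign_pm s))
end Aux2

section Aux3
variable {V : Type*} [Fintype V] [LinearOrder V]
open Finset

lemma sum_delta_pair (a b : V) (c : ℝ) :
    ∑ i, ∑ j, (if i = a ∧ j = b then c else 0) = c := by
  simp [ite_and, Finset.sum_ite_eq']

lemma abs_le_ipVal (G : SimpleGraph V) (w : V → V → ℝ) {a b : V}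
    (hab : a < b) (hAdj : G.Adj a b) : |w a b| ≤ ipVal G w := by
  set σ : ℝ := if 0 ≤ w a b then 1 else -1 with hσ
  have hσpm : σ = 1 ∨ σ = -1 := by rw [hσ]; split <;> simp
  have hσw : w a b * σ = |w a b| := by
    rw [hσ]; split
    · next h => rw [mul_one, abs_of_nonneg h]
    · next h => rw [abs_of_neg (lt_of_not_ge h)]; ring
  set x : (V → Bool) → V → ℝ :=
    fun s i => if i = a then σ * toSign s b else toSign s i with hx
  have hxa : ∀ s, x s a = σ * toSign s b := by intro s; simp only [hx, if_pos rfl]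
  have hxo : ∀ s i, i ≠ a → x s i = toSign s i := by
    intro s i hi; simp only [hx]; rw [if_neg hi]
  have hxpm : ∀ s i, x s i = 1 ∨ x s i = -1 := by
    intro s i
    by_cases hi : i = a
    · subst hi; rw [hxa]; exact pm_mul hσpm (toSign_pm s b)
    · rw [hxo s i hi]; exact toSign_pm s i
  have hba : b ≠ a := (ne_of_lt hab).symm
  -- cross sums vanish except at (a,b)
  have hcross : ∀ i j : V, i < j → ¬(i = a ∧ j = b) →
      ∑ s : V → Bool, x s i * x s j = 0 := by
    intro i j hij hne
    by_cases hia : i = a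
    · subst hia
      have hjb : j ≠ b := fun h => hne ⟨rfl, h⟩
      have hja : j ≠ i := (ne_of_lt hij).symm
      have hrw : ∀ s : V → Bool, x s i * x s j = σ * (toSign s b * toSign s j) := by
        intro s; rw [hxa, hxo s j (hja.trans_eq rfl)]; ring
      simp only [hrw]
      rw [← Finset.mul_sum, sum_toSign_mul (Ne.symm hjb), mul_zero]
    · by_cases hja : j = a
      · subst hja
        have hib : i ≠ b := fun h => (lt_asymm hij (h ▸ hab)).elim
        have hrw : ∀ s : V → Bool, x s i * x s j = σ * (toSign s i * toSign s b) := by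
          intro s; rw [hxa, hxo s i hia]; ring
        simp only [hrw]
        rw [← Finset.mul_sum, sum_toSign_mul hib, mul_zero]
      · have hrw : ∀ s : V → Bool, x s i * x s j = toSign s i * toSign s j := by
          intro s; rw [hxo s i hia, hxo s j hja]
        simp only [hrw]
        exact sum_toSign_mul (ne_of_lt hij)
  have hab2 : ∀ s : V → Bool, x s a * x s b = σ := by
    intro s
    rw [hxa, hxo s b hba]
    rcases toSign_pm s b with h | h <;> rw [h] <;> ring
  -- total sum
  have htot : ∑ s : V → Bool, edgeSum G w (fun i j => x s i * x s j)
      = (Finset.univ.card (α := V → Bool) : ℝ) * |w a b| := by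
    unfold edgeSum
    rw [Finset.sum_comm]
    have hswap : ∀ i ∈ Finset.univ (α := V),
        (∑ s : V → Bool, ∑ j, if i < j ∧ G.Adj i j then w i j * (x s i * x s j) else 0)
        = ∑ j, ∑ s : V → Bool, (if i < j ∧ G.Adj i j then w i j * (x s i * x s j) else 0) :=
      fun i _ => Finset.sum_comm
    rw [Finset.sum_congr rfl hswap]
    have hterm : ∀ i ∈ Finset.univ (α := V), ∀ j ∈ Finset.univ (α := V),
        (∑ s : V → Bool, if i < j ∧ G.Adj i j then w i j * (x s i * x s j) else 0)
        = if i = a ∧ j = b then (Finset.univ.card (α := V → Bool) : ℝ) * |w a b| else 0 := by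
      intro i _ j _
      by_cases hij : i = a ∧ j = b
      · obtain ⟨hia, hjb⟩ := hij
        subst hia; subst hjb
        rw [if_pos ⟨rfl, rfl⟩]
        have hval : ∀ s : V → Bool, (if i < j ∧ G.Adj i j then w i j * (x s i * x s j) else 0)
            = |w i j| := by
          intro s
          rw [if_pos ⟨hab, hAdj⟩, hab2 s, hσw]
        simp only [hval]
        rw [Finset.sum_const, nsmul_eq_mul]
      · rw [if_neg hij]
        by_cases hc : i < j ∧ G.Adj i j
        · have hz := hcross i j hc.1 hij
          simp only [if_pos hc]
          rw [← Finset.mul_sum, hz, mul_zero]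
        · simp only [if_neg hc, Finset.sum_const_zero]
    rw [Finset.sum_congr rfl fun i hi => Finset.sum_congr rfl (hterm i hi)]
    exact sum_delta_pair a b _
  -- conclude by averaging
  have hex : ∃ s : V → Bool, |w a b| ≤ edgeSum G w (fun i j => x s i * x s j) := by
    by_contra hcon
    push_neg at hcon
    have hlt : ∑ s : V → Bool, edgeSum G w (fun i j => x s i * x s j)
        < ∑ _s : V → Bool, |w a b| :=
      Finset.sum_lt_sum_of_nonempty (Finset.univ_nonempty) (fun s _ => hcon s)
    rw [htot, Finset.sum_const, nsmul_eq_mul] at hlt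
    exact lt_irrefl _ hlt
  obtain ⟨s, hs⟩ := hex
  exact hs.trans (le_ipVal G w (hxpm s))

lemma sdpVal_le_card_sq_mul_ipVal (G : SimpleGraph V) (w : V → V → ℝ) :
    sdpVal G w ≤ (Fintype.card V : ℝ)^2 * ipVal G w := by
  have hip := ipVal_nonneg G w
  refine sdpVal_le G w (by positivity) fun u hu => ?_
  have h1 : edgeSum G w (fun i j => (inner ℝ (u i) (u j) : ℝ)) ≤ absSum G w := by
    refine edgeSum_le_absSum G w _ fun i j => ?_
    calc |(inner ℝ (u i) (u j) : ℝ)| ≤ ‖u i‖ * ‖u j‖ := abs_real_inner_le_norm _ _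
      _ = 1 := by rw [hu i, hu j, one_mul]
  refine h1.trans ?_
  unfold absSum
  calc (∑ i, ∑ j, if i < j ∧ G.Adj i j then |w i j| else 0)
      ≤ ∑ _i : V, ∑ _j : V, ipVal G w := by
        refine Finset.sum_le_sum fun i _ => Finset.sum_le_sum fun j _ => ?_
        split
        · next h => exact abs_le_ipVal G w h.1 h.2
        · exact hip
    _ = (Fintype.card V : ℝ)^2 * ipVal G w := by
        rw [Finset.sum_const, Finset.sum_const, Finset.card_univ, nsmul_eq_mul,
          nsmul_eq_mul]
        ring
end Aux3

section Aux4
variable {V : Type*} [Fintype V] [LinearOrder V]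
open Finset Matrix

lemma kappa_bddAbove (G : SimpleGraph V) :
    BddAbove {t | ∃ w : V → V → ℝ, t = sdpVal G w / ipVal G w} := by
  refine ⟨(Fintype.card V : ℝ)^2, ?_⟩
  rintro t ⟨w, rfl⟩
  rcases eq_or_lt_of_le (ipVal_nonneg G w) with h0 | hpos
  · rw [← h0, div_zero]; positivity
  · rw [div_le_iff₀ hpos]
    exact sdpVal_le_card_sq_mul_ipVal G w

lemma ratio_le_kappaVal (G : SimpleGraph V) (w : V → V → ℝ) :
    sdpVal G w / ipVal G w ≤ kappaVal G :=
  le_csSup (kappa_bddAbove G) ⟨w, rfl⟩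

lemma kappaVal_nonneg (G : SimpleGraph V) : 0 ≤ kappaVal G := by
  have h := ratio_le_kappaVal G (fun _ _ => 0)
  rwa [sdpVal_zero, zero_div] at h

/-- linear-functional view of `edgeSum` in the matrix argument -/
lemma edgeSum_matrix_isLinear (G : SimpleGraph V) (w : V → V → ℝ) :
    IsLinearMap ℝ (fun M : Matrix V V ℝ => edgeSum G w (fun i j => M i j)) := by
  constructor
  · intro M N
    simp only [edgeSum, Matrix.add_apply]
    rw [← Finset.sum_add_distrib]
    refine Finset.sum_congr rfl fun i _ => ?_
    rw [← Finset.sum_add_distrib]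
    refine Finset.sum_congr rfl fun j _ => ?_
    split <;> ring
  · intro c M
    simp only [edgeSum, Matrix.smul_apply, smul_eq_mul]
    rw [Finset.mul_sum]
    refine Finset.sum_congr rfl fun i _ => ?_
    rw [Finset.mul_sum]
    refine Finset.sum_congr rfl fun j _ => ?_
    split <;> ring

lemma edgeSumAll_smul (w : V → V → ℝ) (c : ℝ) (X : Matrix V V ℝ) :
    edgeSumAll w (c • X) = c * edgeSumAll w X := by
  simp only [edgeSumAll, Matrix.smul_apply, smul_eq_mul]
  rw [Finset.mul_sum]
  refine Finset.sum_congr rfl fun i _ => ?_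
  rw [Finset.mul_sum]
  refine Finset.sum_congr rfl fun j _ => ?_
  split <;> ring

/-- the Gram matrix of unit vectors is in the elliptope -/
lemma gram_mem_elliptope (u : V → EuclideanSpace ℝ V) (hu : ∀ i, ‖u i‖ = 1) :
    (Matrix.of fun i j => (inner ℝ (u i) (u j) : ℝ)) ∈ elliptope V := by
  constructor
  · have heq : (Matrix.of fun i j => (inner ℝ (u i) (u j) : ℝ))
        = (Matrix.of fun l i => u i l)ᴴ * (Matrix.of fun l i => u i l) := by
      ext i j
      rw [Matrix.mul_apply]
      simp only [Matrix.conjTranspose_apply, Matrix.of_apply, star_trivial]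
      rw [PiLp.inner_apply]
      simp [RCLike.inner_apply, starRingEnd_apply]
      exact Finset.sum_congr rfl fun _ _ => mul_comm _ _
    rw [heq]
    exact Matrix.posSemidef_conjTranspose_mul_self _
  · intro i
    simp only [Matrix.of_apply]
    rw [real_inner_self_eq_norm_mul_norm, hu i, one_mul]

/-- unit vectors realizing a matrix in the elliptope -/
lemma elliptope_gram {X : Matrix V V ℝ} (hX : X ∈ elliptope V) :
    ∃ u : V → EuclideanSpace ℝ V, (∀ i, ‖u i‖ = 1) ∧
      ∀ i j, (inner ℝ (u i) (u j) : ℝ) = X i j := by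
  obtain ⟨hpsd, hdiag⟩ := hX
  open scoped MatrixOrder in
  set B := CFC.sqrt X with hB
  open scoped MatrixOrder in
  have hBB : B * B = X := CFC.sqrt_mul_sqrt_self X hpsd.nonneg
  open scoped MatrixOrder in
  have hherm : Bᴴ = B := (CFC.sqrt_nonneg X).posSemidef.1
  have hsymm : ∀ i j, B i j = B j i := by
    intro i j
    conv_lhs => rw [← hherm]
    simp [Matrix.conjTranspose_apply]
  set u : V → EuclideanSpace ℝ V := fun i => WithLp.toLp 2 (B i : V → ℝ) with hu
  have hinner : ∀ i j, (inner ℝ (u i) (u j) : ℝ) = X i j := by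
    intro i j
    rw [PiLp.inner_apply]
    have : ∀ l, (inner ℝ (u i l) (u j l) : ℝ) = B i l * B l j := by
      intro l
      simp only [hu]
      rw [RCLike.inner_apply]
      simp [starRingEnd_apply, hsymm l j]
      exact mul_comm _ _
    rw [Finset.sum_congr rfl fun l _ => this l]
    rw [← Matrix.mul_apply, hBB]
  refine ⟨u, fun i => ?_, hinner⟩
  have h1 : ‖u i‖ * ‖u i‖ = 1 := by
    rw [← real_inner_self_eq_norm_mul_norm, hinner i i, hdiag i]
  nlinarith [norm_nonneg (u i)]
end Aux4

section Aux5
open Finset Matrix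

lemma edgeSumAll_le_kappa_top {n k : ℕ} (hk : 0 < k) (w : Fin n → Fin n → ℝ)
    (hw : ValidIneq w) (hsupp : (suppSet w).ncard ≤ k)
    {X : Matrix (Fin n) (Fin n) ℝ} (hX : X ∈ elliptope (Fin n)) :
    edgeSumAll w X ≤ kappaVal (⊤ : SimpleGraph (Fin k)) := by
  classical
  set F : Finset (Fin n) := (suppSet w).toFinset with hF
  have hFc : F.card ≤ k := by
    rw [hF, ← Set.ncard_eq_toFinset_card']
    exact hsupp
  have hmemF : ∀ i j : Fin n, i < j → w i j ≠ 0 → i ∈ F ∧ j ∈ F := by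
    intro i j hij hw0
    constructor
    · rw [hF, Set.mem_toFinset]; exact ⟨j, Or.inl ⟨hij, hw0⟩⟩
    · rw [hF, Set.mem_toFinset]; exact ⟨i, Or.inr ⟨hij, hw0⟩⟩
  rcases Finset.eq_empty_or_nonempty F with hFe | hFne
  · have hz : edgeSumAll w X = 0 := by
      unfold edgeSumAll
      refine Finset.sum_eq_zero fun i _ => Finset.sum_eq_zero fun j _ => ?_
      split
      · next h =>
        by_cases h0 : w i j = 0
        · rw [h0, zero_mul]
        · exact absurd ((hmemF i j h h0).1) (by simp [hFe])
      · rfl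
    rw [hz]; exact kappaVal_nonneg _
  obtain ⟨i₀, hi₀⟩ := hFne
  set e := F.orderIsoOfFin (rfl : F.card = F.card) with he
  set ψ : Fin k → Fin n := fun a => if h : (a : ℕ) < F.card then (e ⟨a, h⟩ : Fin n) else i₀
    with hψ
  set φ : Fin n → Fin k := fun i => if h : i ∈ F then Fin.castLE hFc (e.symm ⟨i, h⟩)
    else ⟨0, hk⟩ with hφ
  have hψval : ∀ (a : Fin k) (h : (a:ℕ) < F.card), ψ a = (e ⟨a, h⟩ : Fin n) := by
    intro a h; simp only [hψ]; rw [dif_pos h]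
  have hψmem : ∀ (a : Fin k), (a:ℕ) < F.card → ψ a ∈ F := by
    intro a h; rw [hψval a h]; exact (e ⟨a, h⟩).2
  have hψmono : ∀ a b : Fin k, (a:ℕ) < F.card → (b:ℕ) < F.card → a < b → ψ a < ψ b := by
    intro a b ha hb hab
    rw [hψval a ha, hψval b hb]
    have hlt : (⟨a, ha⟩ : Fin F.card) < ⟨b, hb⟩ := by
      simpa [Fin.mk_lt_mk] using hab
    exact Subtype.coe_lt_coe.mpr (e.lt_iff_lt.mpr hlt)
  have hφval : ∀ (i : Fin n) (h : i ∈ F), φ i = Fin.castLE hFc (e.symm ⟨i, h⟩) := by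
    intro i h; simp only [hφ]; rw [dif_pos h]
  have hφlt : ∀ (i : Fin n) (h : i ∈ F), ((φ i : Fin k) : ℕ) < F.card := by
    intro i h; rw [hφval i h]; simpa using (e.symm ⟨i, h⟩).isLt
  have hφψ : ∀ (a : Fin k) (h : (a:ℕ) < F.card), φ (ψ a) = a := by
    intro a h
    have hmem := hψmem a h
    rw [hφval _ hmem]
    have hsub : (⟨ψ a, hmem⟩ : {x // x ∈ F}) = e ⟨a, h⟩ := Subtype.ext (hψval a h)
    have h2 : e.symm ⟨ψ a, hmem⟩ = ⟨a, h⟩ := by rw [hsub]; exact e.symm_apply_apply _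
    rw [h2]
    exact Fin.ext (by simp)
  have hψφ : ∀ (i : Fin n), i ∈ F → ψ (φ i) = i := by
    intro i h
    have hlt := hφlt i h
    rw [hψval _ hlt]
    have hsub : (⟨((φ i : Fin k) : ℕ), hlt⟩ : Fin F.card) = e.symm ⟨i, h⟩ := by
      apply Fin.ext
      show ((φ i : Fin k) : ℕ) = _
      rw [hφval i h]
      simp
    rw [hsub, e.apply_symm_apply]
  set w' : Fin k → Fin k → ℝ :=
    fun a b => if (a:ℕ) < F.card ∧ (b:ℕ) < F.card then w (ψ a) (ψ b) else 0 with hw'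
  -- the reindexing identity
  have key : ∀ (M : Matrix (Fin n) (Fin n) ℝ) (N : Fin k → Fin k → ℝ),
      (∀ a b : Fin k, (a:ℕ) < F.card → (b:ℕ) < F.card → N a b = M (ψ a) (ψ b)) →
      edgeSumAll w M = edgeSum (⊤ : SimpleGraph (Fin k)) w' N := by
    intro M N hMN
    unfold edgeSumAll edgeSum
    rw [← Finset.sum_product', ← Finset.sum_product']
    refine Eq.trans ((Finset.sum_subset (Finset.filter_subset
        (fun p : Fin n × Fin n => p.1 < p.2 ∧ p.1 ∈ F ∧ p.2 ∈ F) _) ?_).symm)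
      (Eq.trans (Finset.sum_nbij' (fun p : Fin n × Fin n => ((φ p.1, φ p.2) : Fin k × Fin k))
          (fun q : Fin k × Fin k => ((ψ q.1, ψ q.2) : Fin n × Fin n)) ?_ ?_ ?_ ?_ ?_)
        (Finset.sum_subset (Finset.filter_subset
          (fun q : Fin k × Fin k => q.1 < q.2 ∧ (q.1:ℕ) < F.card ∧ (q.2:ℕ) < F.card) _) ?_))
    · -- vanishing outside the support, Fin n side
      intro p hp hnp
      simp only [Finset.mem_filter, hp, true_and] at hnp
      by_cases hlt : p.1 < p.2
      · rw [if_pos hlt]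
        by_cases h0 : w p.1 p.2 = 0
        · rw [h0, zero_mul]
        · exact absurd ⟨hlt, hmemF p.1 p.2 hlt h0⟩ hnp
      · rw [if_neg hlt]
    · -- φ maps into the Fin k side filter
      intro p hp
      simp only [Finset.mem_filter, Finset.mem_product, Finset.mem_univ, true_and] at hp ⊢
      obtain ⟨hlt, h1, h2⟩ := hp
      refine ⟨?_, hφlt _ h1, hφlt _ h2⟩
      rcases lt_trichotomy (φ p.1) (φ p.2) with h | h | h
      · exact h
      · exfalso
        have hc := congrArg ψ h
        rw [hψφ _ h1, hψφ _ h2] at hc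
        exact (ne_of_lt hlt) hc
      · exfalso
        have hc := hψmono _ _ (hφlt _ h2) (hφlt _ h1) h
        rw [hψφ _ h1, hψφ _ h2] at hc
        exact lt_asymm hlt hc
    · -- ψ maps into the Fin n side filter
      intro q hq
      simp only [Finset.mem_filter, Finset.mem_product, Finset.mem_univ, true_and] at hq ⊢
      exact ⟨hψmono _ _ hq.2.1 hq.2.2 hq.1, hψmem _ hq.2.1, hψmem _ hq.2.2⟩
    · -- left inverse
      intro p hp
      simp only [Finset.mem_filter, Finset.mem_product, Finset.mem_univ, true_and] at hp
      exact Prod.ext (hψφ _ hp.2.1) (hψφ _ hp.2.2)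
    · -- right inverse
      intro q hq
      simp only [Finset.mem_filter, Finset.mem_product, Finset.mem_univ, true_and] at hq
      exact Prod.ext (hφψ _ hq.2.1) (hφψ _ hq.2.2)
    · -- values agree
      intro p hp
      simp only [Finset.mem_filter, Finset.mem_product, Finset.mem_univ, true_and] at hp
      obtain ⟨hlt, h1, h2⟩ := hp
      have hltk : φ p.1 < φ p.2 := by
        rcases lt_trichotomy (φ p.1) (φ p.2) with h | h | h
        · exact h
        · exfalso
          have hc := congrArg ψ h
          rw [hψφ _ h1, hψφ _ h2] at hc
          exact (ne_of_lt hlt) hc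
        · exfalso
          have hc := hψmono _ _ (hφlt _ h2) (hφlt _ h1) h
          rw [hψφ _ h1, hψφ _ h2] at hc
          exact lt_asymm hlt hc
      have hAdj : (⊤ : SimpleGraph (Fin k)).Adj (φ p.1) (φ p.2) := by
        simp only [SimpleGraph.top_adj]
        exact ne_of_lt hltk
      rw [if_pos hlt, if_pos ⟨hltk, hAdj⟩]
      have hww : w' (φ p.1) (φ p.2) = w (ψ (φ p.1)) (ψ (φ p.2)) := by
        simp only [hw']
        rw [if_pos ⟨hφlt _ h1, hφlt _ h2⟩]
      rw [hww, hMN _ _ (hφlt _ h1) (hφlt _ h2), hψφ _ h1, hψφ _ h2]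
    · -- vanishing outside the filter, Fin k side
      intro q hq hnq
      simp only [Finset.mem_filter, hq, true_and] at hnq
      by_cases hlt : q.1 < q.2
      · by_cases hcard : (q.1:ℕ) < F.card ∧ (q.2:ℕ) < F.card
        · exact absurd ⟨hlt, hcard⟩ hnq
        · have hw0 : w' q.1 q.2 = 0 := by simp only [hw']; rw [if_neg hcard]
          split
          · rw [hw0, zero_mul]
          · rfl
      · rw [if_neg (fun hc => hlt hc.1)]
  -- Gram vectors for the submatrix
  have hY : X.submatrix ψ ψ ∈ elliptope (Fin k) := by
    refine ⟨hX.1.submatrix ψ, fun a => ?_⟩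
    rw [Matrix.submatrix_apply]
    exact hX.2 (ψ a)
  obtain ⟨u, hu, hgram⟩ := elliptope_gram hY
  have h1 : edgeSumAll w X
      = edgeSum (⊤ : SimpleGraph (Fin k)) w' (fun a b => (inner ℝ (u a) (u b) : ℝ)) := by
    refine key X _ fun a b ha hb => ?_
    rw [hgram a b, Matrix.submatrix_apply]
  have h2 : edgeSumAll w X ≤ sdpVal (⊤ : SimpleGraph (Fin k)) w' := by
    rw [h1]; exact le_sdpVal _ w' hu
  have hip1 : ipVal (⊤ : SimpleGraph (Fin k)) w' ≤ 1 := by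
    refine ipVal_le _ _ zero_le_one fun x hx => ?_
    set χ : Fin n → ℝ := fun i => if i ∈ F then x (φ i) else 1 with hχ
    have hχpm : ∀ i, χ i = 1 ∨ χ i = -1 := by
      intro i; simp only [hχ]; split
      · exact hx _
      · exact Or.inl rfl
    have hkey : edgeSumAll w (Matrix.of fun i j => χ i * χ j)
        = edgeSum (⊤ : SimpleGraph (Fin k)) w' (fun a b => x a * x b) := by
      refine key _ _ fun a b ha hb => ?_
      simp only [Matrix.of_apply]
      have hca : χ (ψ a) = x a := by
        simp only [hχ]; rw [if_pos (hψmem a ha), hφψ a ha]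
      have hcb : χ (ψ b) = x b := by
        simp only [hχ]; rw [if_pos (hψmem b hb), hφψ b hb]
      rw [hca, hcb]
    have hC : (Matrix.of fun i j => χ i * χ j) ∈ cutPolytope (Fin n) :=
      subset_convexHull ℝ _ ⟨χ, hχpm, rfl⟩
    have hle := hw _ hC
    rw [hkey] at hle
    exact hle
  rcases eq_or_lt_of_le (ipVal_nonneg (⊤ : SimpleGraph (Fin k)) w') with h0 | hpos
  · have hsdp0 : sdpVal (⊤ : SimpleGraph (Fin k)) w' ≤ 0 := by
      have hb := sdpVal_le_card_sq_mul_ipVal (⊤ : SimpleGraph (Fin k)) w'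
      rw [← h0, mul_zero] at hb
      exact hb
    calc edgeSumAll w X ≤ sdpVal (⊤ : SimpleGraph (Fin k)) w' := h2
      _ ≤ 0 := hsdp0
      _ ≤ kappaVal (⊤ : SimpleGraph (Fin k)) := kappaVal_nonneg _
  · have hr := ratio_le_kappaVal (⊤ : SimpleGraph (Fin k)) w'
    rw [div_le_iff₀ hpos] at hr
    calc edgeSumAll w X ≤ sdpVal (⊤ : SimpleGraph (Fin k)) w' := h2
      _ ≤ kappaVal (⊤ : SimpleGraph (Fin k)) * ipVal (⊤ : SimpleGraph (Fin k)) w' := hr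
      _ ≤ kappaVal (⊤ : SimpleGraph (Fin k)) * 1 :=
          mul_le_mul_of_nonneg_left hip1 (kappaVal_nonneg _)
      _ = kappaVal (⊤ : SimpleGraph (Fin k)) := mul_one _
end Aux5

section Aux6
open Finset Matrix

lemma cutPolytope_entry_le {V : Type*} [Fintype V] [LinearOrder V] {C : Matrix V V ℝ}
    (hC : C ∈ cutPolytope V) (i j : V) : C i j ≤ 1 := by
  have hsub : cutPolytope V ⊆ {M : Matrix V V ℝ | M i j ≤ 1} := by
    refine convexHull_min ?_ (convex_halfSpace_le ?_ 1)
    · rintro M ⟨x, hx, rfl⟩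
      simp only [Set.mem_setOf_eq, Matrix.of_apply]
      rcases pm_mul (hx i) (hx j) with h | h <;> rw [h] <;> norm_num
    · exact ⟨fun M N => by simp [Matrix.add_apply], fun c M => by simp [Matrix.smul_apply]⟩
  exact hsub hC

lemma sdpVal_of_no_edges {V : Type*} [Fintype V] [LinearOrder V] (G : SimpleGraph V)
    (hE : ∀ i j, ¬ G.Adj i j) (w : V → V → ℝ) : sdpVal G w = 0 := by
  refine le_antisymm (sdpVal_le G w le_rfl fun u hu => ?_) (sdpVal_nonneg G w)
  unfold edgeSum
  refine le_of_eq (Finset.sum_eq_zero fun i _ => Finset.sum_eq_zero fun j _ => ?_)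
  rw [if_neg (fun hc => hE i j hc.2)]

lemma one_le_kappa_top {k : ℕ} (hk : 2 ≤ k) :
    (1:ℝ) ≤ kappaVal (⊤ : SimpleGraph (Fin k)) := by
  obtain ⟨z, o, hzo⟩ : ∃ z o : Fin k, z < o :=
    ⟨⟨0, by omega⟩, ⟨1, by omega⟩, Fin.mk_lt_mk.mpr one_pos⟩
  have hne : z ≠ o := ne_of_lt hzo
  have hAdjzo : (⊤ : SimpleGraph (Fin k)).Adj z o := by
    simp only [SimpleGraph.top_adj]; exact hne
  set wst : Fin k → Fin k → ℝ := fun a b => if a = z ∧ b = o then 1 else 0 with hwst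
  have hw1 : wst z o = 1 := by simp [hwst]
  have hcompute : ∀ f : Fin k → Fin k → ℝ,
      edgeSum (⊤ : SimpleGraph (Fin k)) wst f = f z o := by
    intro f
    unfold edgeSum
    refine Eq.trans (Finset.sum_congr rfl fun a _ => Finset.sum_congr rfl fun b _ => ?_)
      (sum_delta_pair z o (f z o))
    by_cases hab : a = z ∧ b = o
    · obtain ⟨h1, h2⟩ := hab
      rw [h1, h2, if_pos ((⟨hzo, hAdjzo⟩ : z < o ∧ (⊤ : SimpleGraph (Fin k)).Adj z o)),
        hw1, one_mul, if_pos (⟨rfl, rfl⟩ : z = z ∧ o = o)]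
    · rw [if_neg hab]
      have hw0 : wst a b = 0 := by simp only [hwst]; rw [if_neg hab]
      split
      · rw [hw0, zero_mul]
      · rfl
  have hsdp : sdpVal (⊤ : SimpleGraph (Fin k)) wst = 1 := by
    refine le_antisymm (sdpVal_le _ _ zero_le_one fun u hu => ?_) ?_
    · rw [hcompute]
      calc (inner ℝ (u z) (u o) : ℝ) ≤ ‖u z‖ * ‖u o‖ := real_inner_le_norm _ _
        _ = 1 := by rw [hu z, hu o, one_mul]
    · have hmem := le_sdpVal (⊤ : SimpleGraph (Fin k)) wst
        (u := fun _ => EuclideanSpace.single z (1:ℝ))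
        (fun i => by simp [EuclideanSpace.norm_single])
      rw [hcompute] at hmem
      calc (1:ℝ)
          = inner ℝ (EuclideanSpace.single z (1:ℝ)) (EuclideanSpace.single z (1:ℝ)) := by
            rw [real_inner_self_eq_norm_mul_norm]
            simp [EuclideanSpace.norm_single]
        _ ≤ _ := hmem
  have hip : ipVal (⊤ : SimpleGraph (Fin k)) wst = 1 := by
    refine le_antisymm (ipVal_le _ _ zero_le_one fun x hx => ?_) ?_
    · rw [hcompute]
      rcases pm_mul (hx z) (hx o) with h | h <;> rw [h] <;> norm_num
    · have hmem := le_ipVal (⊤ : SimpleGraph (Fin k)) wst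
        (x := fun _ => (1:ℝ)) (fun i => Or.inl rfl)
      rw [hcompute] at hmem
      simpa using hmem
  have hrat := ratio_le_kappaVal (⊤ : SimpleGraph (Fin k)) wst
  rwa [hsdp, hip, div_one] at hrat
end Aux6

/-- if `G ∈ 𝒢_k` then `κ(G) ≤ κ(K_k)`. -/
theorem kappa_le_kappa_complete_of_inGk {n : ℕ} (k : ℕ)
    (G : SimpleGraph (Fin n)) (hG : inGk k G) :
    kappaVal G ≤ kappaVal (⊤ : SimpleGraph (Fin k)) := by
  refine Real.sSup_le ?_ (kappaVal_nonneg _)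
  rintro t ⟨w₀, rfl⟩
  by_cases hk : k ≤ 1
  · -- degenerate case: G must be edgeless
    have hRk : Rk (Fin n) k = Set.univ := by
      ext X
      simp only [Rk, Set.mem_setOf_eq, Set.mem_univ, iff_true]
      intro w hw hsupp
      have hzero : ∀ i j : Fin n, i < j → w i j = 0 := by
        intro i j hij
        by_contra h0
        have hij2 : ({i, j} : Set (Fin n)) ⊆ suppSet w := by
          intro l hl
          rcases hl with hl | hl
          · subst hl; exact ⟨j, Or.inl ⟨hij, h0⟩⟩
          · rw [Set.mem_singleton_iff] at hl
            subst hl; exact ⟨i, Or.inr ⟨hij, h0⟩⟩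
        have h2 : 2 ≤ (suppSet w).ncard := by
          calc 2 = ({i, j} : Set (Fin n)).ncard := (Set.ncard_pair (ne_of_lt hij)).symm
            _ ≤ (suppSet w).ncard := Set.ncard_le_ncard hij2 (Set.toFinite _)
        omega
      have hz : edgeSumAll w X = 0 := by
        unfold edgeSumAll
        refine Finset.sum_eq_zero fun i _ => Finset.sum_eq_zero fun j _ => ?_
        split
        · next h => rw [hzero i j h, zero_mul]
        · rfl
      rw [hz]; exact zero_le_one
    have hE : ∀ i j : Fin n, ¬ G.Adj i j := by
      intro i j hAdj
      have hother : ∃ a b : Fin n, a < b ∧ G.Adj a b := by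
        rcases lt_trichotomy i j with h | h | h
        · exact ⟨i, j, h, hAdj⟩
        · exact absurd h (G.ne_of_adj hAdj)
        · exact ⟨j, i, h, hAdj.symm⟩
      obtain ⟨a, b, hab, hAdj'⟩ := hother
      set X0 : Matrix (Fin n) (Fin n) ℝ :=
        Matrix.of (fun p q => if p = a ∧ q = b then (2:ℝ) else 0) with hX0
      have hmem : projE G X0 ∈ projE G '' Rk (Fin n) k :=
        ⟨X0, by rw [hRk]; trivial, rfl⟩
      rw [← hG] at hmem
      obtain ⟨C, hC, hCeq⟩ := hmem
      have h2 : C a b = 2 := by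
        have hcc := congrFun (congrFun hCeq a) b
        simp only [projE, if_pos hAdj'] at hcc
        rw [hcc]
        simp [hX0]
      have hle := cutPolytope_entry_le hC a b
      linarith
    rw [sdpVal_of_no_edges G hE w₀, zero_div]
    exact kappaVal_nonneg _
  · push_neg at hk
    have hk2 : 2 ≤ k := hk
    have hκ1 := one_le_kappa_top hk2
    have hκpos : (0:ℝ) < kappaVal (⊤ : SimpleGraph (Fin k)) := lt_of_lt_of_le one_pos hκ1
    have hκne : kappaVal (⊤ : SimpleGraph (Fin k)) ≠ 0 := ne_of_gt hκpos
    rcases eq_or_lt_of_le (ipVal_nonneg G w₀) with hip0 | hippos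
    · rw [← hip0, div_zero]
      exact le_of_lt hκpos
    · rw [div_le_iff₀ hippos]
      refine sdpVal_le G w₀ (by positivity) fun u hu => ?_
      set κ := kappaVal (⊤ : SimpleGraph (Fin k)) with hκd
      set X : Matrix (Fin n) (Fin n) ℝ :=
        Matrix.of (fun i j => (inner ℝ (u i) (u j) : ℝ)) with hXd
      have hXell : X ∈ elliptope (Fin n) := gram_mem_elliptope u hu
      have hZRk : κ⁻¹ • X ∈ Rk (Fin n) k := by
        intro w hw hsupp
        rw [edgeSumAll_smul]
        have hb := edgeSumAll_le_kappa_top (n := n) (k := k) (by omega) w hw hsupp hXell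
        calc κ⁻¹ * edgeSumAll w X ≤ κ⁻¹ * κ :=
              mul_le_mul_of_nonneg_left hb (by positivity)
          _ = 1 := inv_mul_cancel₀ hκne
      have hmem : projE G (κ⁻¹ • X) ∈ projE G '' Rk (Fin n) k := ⟨_, hZRk, rfl⟩
      rw [← hG] at hmem
      obtain ⟨C, hC, hCeq⟩ := hmem
      have hlin := edgeSum_matrix_isLinear G w₀
      have hLC : edgeSum G w₀ (fun i j => C i j) ≤ ipVal G w₀ := by
        have hsubset : cutPolytope (Fin n) ⊆
            {M : Matrix (Fin n) (Fin n) ℝ | edgeSum G w₀ (fun i j => M i j) ≤ ipVal G w₀} := by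
          refine convexHull_min ?_ (convex_halfSpace_le hlin _)
          rintro M ⟨x, hx, rfl⟩
          exact le_ipVal G w₀ hx
        exact hsubset hC
      have hfinal : edgeSum G w₀ (fun i j => (inner ℝ (u i) (u j) : ℝ))
          = κ * edgeSum G w₀ (fun i j => C i j) := by
        rw [edgeSum_eq, edgeSum_eq, Finset.mul_sum]
        refine Finset.sum_congr rfl fun i _ => ?_
        rw [Finset.mul_sum]
        refine Finset.sum_congr rfl fun j _ => ?_
        by_cases hc : i < j ∧ G.Adj i j
        · rw [if_pos hc]
          have hCij : C i j = κ⁻¹ * (inner ℝ (u i) (u j) : ℝ) := by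
            have hcc := congrFun (congrFun hCeq i) j
            simp only [projE, if_pos hc.2] at hcc
            rw [hcc, Matrix.smul_apply, smul_eq_mul]
            rfl
          rw [hCij]
          have hring : κ * (w₀ i j * (κ⁻¹ * (inner ℝ (u i) (u j) : ℝ)))
              = (κ * κ⁻¹) * (w₀ i j * (inner ℝ (u i) (u j) : ℝ)) := by ring
          rw [hring, mul_inv_cancel₀ hκne, one_mul]
        · rw [if_neg hc]
          ring
      calc edgeSum G w₀ (fun i j => (inner ℝ (u i) (u j) : ℝ))
          = κ * edgeSum G w₀ (fun i j => C i j) := hfinal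
        _ ≤ κ * ipVal G w₀ := mul_le_mul_of_nonneg_left hLC (le_of_lt hκpos)
end
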